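/- Let L be a complex polynomial with L(Λq^m) ≠ 0 for every nonzero multi-index m, set ε_m = 1/|L(Λq^m)|, let n ≥ 1, and define δ_m recursively from this ε and n as in the context. Let 0 < ν̃ ≤ 1 be such that ν̃·ε_m ≤ 1 for every multi-index m with |m| = 1. Suppose the family of complex numbers (c_m) satisfies the reduced-equation recursion (R1) for L and a finitely supported coefficient family (A_{k,p}), and the family of nonnegative real numbers (C_m) satisfies the majorant recursion (R2) with this ν̃ and the same coefficients. Then |c_m| ≤ δ_m·C_m for every nonzero multi-index m. -/

import Mathlib

/-- `s_m = max(1, |q₁|^{m₁}⋯|q_s|^{m_s})`. -/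
noncomputable def smax (s : ℕ) (q : Fin s → ℂ) (m : Fin s → ℕ) : ℝ :=
  max 1 (∏ i, ‖q i‖ ^ m i)

/-- Sum of `∏ t, g(f t)` over all ordered `p`-tuples `f` of nonzero multi-indices
with `f 0 + ⋯ + f (p-1) = l`. For `p = 0` it equals `1` if `l = 0` and `0` otherwise. -/
noncomputable def tupleSumC (s : ℕ) (g : (Fin s → ℕ) → ℂ) (p : ℕ) (l : Fin s → ℕ) : ℂ :=
  ∑ᶠ f ∈ {f : Fin p → Fin s → ℕ | (∀ t, f t ≠ 0) ∧ (∑ t, f t) = l}, ∏ t, g (f t)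

/-- Real version of `tupleSumC` (the quantity `S(l,p)` of the majorant recursion). -/
noncomputable def tupleSumR (s : ℕ) (C : (Fin s → ℕ) → ℝ) (p : ℕ) (l : Fin s → ℕ) : ℝ :=
  ∑ᶠ f ∈ {f : Fin p → Fin s → ℕ | (∀ t, f t ≠ 0) ∧ (∑ t, f t) = l}, ∏ t, C (f t)

private lemma entry_le_of_sum_eq {s p : ℕ} {f : Fin p → Fin s → ℕ} {l : Fin s → ℕ}
    (hf : (∑ t, f t) = l) (t : Fin p) : f t ≤ l := by
  intro i
  calc f t i ≤ ∑ t', f t' i :=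
    Finset.single_le_sum (f := fun t' => f t' i) (fun _ _ => Nat.zero_le _) (Finset.mem_univ t)
  _ = l i := by rw [← hf]; simp

private lemma finite_sumto (s N : ℕ) (r : Fin s → ℕ) :
    {f : Fin N → Fin s → ℕ | (∑ t, f t) = r}.Finite := by
  apply Set.Finite.subset (Set.Finite.pi (fun _ : Fin N => Set.finite_Iic r))
  intro f hf
  simp only [Set.mem_pi, Set.mem_Iic]
  exact fun t _ => entry_le_of_sum_eq hf t

private lemma finite_tuples (s p : ℕ) (l : Fin s → ℕ) :
    {f : Fin p → Fin s → ℕ | (∀ t, f t ≠ 0) ∧ (∑ t, f t) = l}.Finite :=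
  (finite_sumto s p l).subset (fun _ hf => hf.2)

private lemma tupleSumC_eq (s : ℕ) (g : (Fin s → ℕ) → ℂ) (p : ℕ) (l : Fin s → ℕ) :
    tupleSumC s g p l = ∑ f ∈ (finite_tuples s p l).toFinset, ∏ t, g (f t) :=
  finsum_mem_eq_finite_toFinset_sum _ _

private lemma tupleSumR_eq (s : ℕ) (C : (Fin s → ℕ) → ℝ) (p : ℕ) (l : Fin s → ℕ) :
    tupleSumR s C p l = ∑ f ∈ (finite_tuples s p l).toFinset, ∏ t, C (f t) :=
  finsum_mem_eq_finite_toFinset_sum _ _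

private lemma abs_tupleSumC_le (s p : ℕ) (l : Fin s → ℕ) (g : (Fin s → ℕ) → ℂ)
    (D : (Fin s → ℕ) → ℝ)
    (h : ∀ lam, lam ≠ 0 → lam ≤ l → ‖g lam‖ ≤ D lam) :
    ‖tupleSumC s g p l‖ ≤ tupleSumR s D p l := by
  rw [tupleSumC_eq, tupleSumR_eq]
  refine (norm_sum_le _ _).trans (Finset.sum_le_sum ?_)
  intro f hf
  rw [Set.Finite.mem_toFinset] at hf
  rw [norm_prod]
  exact Finset.prod_le_prod (fun t _ => norm_nonneg _)
    (fun t _ => h (f t) (hf.1 t) (entry_le_of_sum_eq hf.2 t))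

private lemma one_le_smax (s : ℕ) (q : Fin s → ℂ) (m : Fin s → ℕ) : 1 ≤ smax s q m :=
  le_max_left _ _

/-- decomposition of `k` into unit vectors -/
private def unitList (s : ℕ) (k : Fin s → ℕ) : List (Fin s → ℕ) :=
  (List.finRange s).flatMap fun i => List.replicate (k i) (Pi.single i 1)

private lemma unitList_sum (s : ℕ) (k : Fin s → ℕ) : (unitList s k).sum = k := by
  unfold unitList
  rw [List.flatMap, List.sum_flatten, List.map_map]
  have h : (List.sum ∘ fun i : Fin s => List.replicate (k i) (Pi.single i 1))
      = fun i => Pi.single i (k i) := by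
    funext i
    simp only [Function.comp_apply, List.sum_replicate]
    ext x
    simp [Pi.single_apply]
  rw [h, ← Fin.sum_univ_def, Finset.univ_sum_single]

private lemma unitList_mem (s : ℕ) (k : Fin s → ℕ) {y : Fin s → ℕ} (hy : y ∈ unitList s k) :
    ∃ i, y = Pi.single i 1 := by
  unfold unitList at hy
  simp only [List.mem_flatMap, List.mem_replicate] at hy
  obtain ⟨i, _, _, h⟩ := hy
  exact ⟨i, h⟩

private lemma unitList_length (s : ℕ) (k : Fin s → ℕ) :
    (unitList s k).length = ∑ i, k i := by
  unfold unitList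
  rw [List.length_flatMap]
  rw [Fin.sum_univ_def]
  congr 1
  simp

private lemma single_ne_zero' (s : ℕ) (i : Fin s) : (Pi.single i 1 : Fin s → ℕ) ≠ 0 := by
  intro h
  have := congrFun h i
  simp at this

private lemma single_abs_one (s : ℕ) (i : Fin s) : ∑ x, (Pi.single i 1 : Fin s → ℕ) x = 1 := by
  simp [Finset.sum_pi_single']

private lemma one_le_absval {s : ℕ} {k : Fin s → ℕ} (hk : k ≠ 0) : 1 ≤ ∑ i, k i := by
  rcases Function.ne_iff.1 hk with ⟨i, hi⟩
  calc 1 ≤ k i := Nat.one_le_iff_ne_zero.2 hi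
  _ ≤ ∑ i', k i' := Finset.single_le_sum (f := fun i' => k i')
      (fun _ _ => Nat.zero_le _) (Finset.mem_univ i)

private lemma mub (s n : ℕ) (q : Fin s → ℂ) (δ μ : (Fin s → ℕ) → ℝ)
    (hδ1 : ∀ m : Fin s → ℕ, (∑ i, m i) = 1 → δ m = 1)
    (hμ : ∀ m : Fin s → ℕ, 1 < ∑ i, m i →
      IsGreatest {x : ℝ | ∃ l : List (Fin s → ℕ), 2 ≤ l.length ∧ (∀ y ∈ l, y ≠ 0) ∧
        l.sum = m ∧ (l.map fun y => smax s q y ^ n * δ y).prod = x} (μ m))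
    (hδ0 : ∀ y : Fin s → ℕ, y ≠ 0 → 0 ≤ δ y)
    (m k : Fin s → ℕ) (hm : m ≠ 0) (hk : k ≠ 0) (hkm : k ≤ m)
    (n' : ℕ) (p : Fin n' → ℕ) (ls : Fin n' → Fin s → ℕ) (hls : (∑ j, ls j) = m - k)
    (F : (j : Fin n') → Fin (p j) → Fin s → ℕ)
    (hF : ∀ j, (∀ u : Fin (p j), F j u ≠ 0) ∧ (∑ u , F j u ) = ls j) :
    (∏ j, ∏ t, (smax s q (F j t) ^ n * δ (F j t))) ≤
      if (∑ i, m i) = 1 then 1 else μ m := by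
  set w : (Fin s → ℕ) → ℝ := fun y => smax s q y ^ n * δ y with hw
  set LF : List (Fin s → ℕ) := (List.finRange n').flatMap fun j => List.ofFn (F j) with hLF
  have hLFsum : LF.sum = m - k := by
    rw [hLF, List.flatMap, List.sum_flatten, List.map_map]
    have h : (List.sum ∘ fun j : Fin n' => List.ofFn (F j)) = fun j => ls j := by
      funext j
      simp only [Function.comp_apply, List.sum_ofFn]
      exact (hF j).2
    rw [h, ← Fin.sum_univ_def, hls]
  have hLFmem : ∀ y ∈ LF, ∃ j t, y = F j t := by
    intro y hy
    rw [hLF] at hy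
    simp only [List.mem_flatMap, List.mem_finRange, List.mem_ofFn, true_and] at hy
    obtain ⟨j, t, ht⟩ := hy
    exact ⟨j, t, ht.symm⟩
  have hLFne : ∀ y ∈ LF, y ≠ 0 := by
    intro y hy
    obtain ⟨j, t, rfl⟩ := hLFmem y hy
    exact (hF j).1 t
  have hLFprod : (LF.map w).prod = ∏ j, ∏ t, w (F j t) := by
    rw [hLF, List.map_flatMap, List.flatMap, List.prod_flatten, List.map_map,
      Fin.prod_univ_def]
    congr 1
    apply List.map_congr_left
    intro j _
    simp only [Function.comp_apply, List.map_ofFn, List.prod_ofFn]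
  by_cases h1 : (∑ i, m i) = 1
  · rw [if_pos h1]
    -- all tuples are empty
    have hsum0 : ∑ i, (m - k) i = 0 := by
      have h2 : (∑ i, (m - k) i) + (∑ i, k i) = ∑ i, m i := by
        rw [← Finset.sum_add_distrib]
        apply Finset.sum_congr rfl
        intro i _
        simp only [Pi.sub_apply]
        exact Nat.sub_add_cancel (hkm i)
      have h3 := one_le_absval hk
      omega
    have hz : ∀ (j : Fin n') (t : Fin (p j)), False := by
      intro j t
      have hcalc : ∑ j', ∑ t', ∑ i, F j' t' i = 0 := by
        have : ∀ j', ∑ t', ∑ i, F j' t' i = ∑ i, ls j' i := by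
          intro j'
          rw [Finset.sum_comm]
          rw [← (hF j').2]
          apply Finset.sum_congr rfl
          intro i _
          simp
        rw [Finset.sum_congr rfl fun j' _ => this j', Finset.sum_comm, ← hsum0]
        apply Finset.sum_congr rfl
        intro i _
        rw [← hls]
        simp
      have hj : ∑ t', ∑ i, F j t' i = 0 := by
        have := Finset.sum_eq_zero_iff.1 hcalc j (Finset.mem_univ j)
        exact this
      have ht := Finset.sum_eq_zero_iff.1 hj t (Finset.mem_univ t)
      have := one_le_absval ((hF j).1 t)
      omega
    have heq : (∏ j, ∏ t, w (F j t)) = 1 := by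
      rw [Finset.prod_congr rfl fun j _ => Finset.prod_eq_one fun t _ => (hz j t).elim]
      exact Finset.prod_const_one
    exact le_of_eq heq
  · rw [if_neg h1]
    have hgt : 1 < ∑ i, m i := lt_of_le_of_ne (one_le_absval hm) (Ne.symm h1)
    set l := LF ++ unitList s k with hl
    have hlsum : l.sum = m := by
      rw [hl, List.sum_append, hLFsum, unitList_sum]
      funext i
      simp only [Pi.add_apply, Pi.sub_apply]
      exact Nat.sub_add_cancel (hkm i)
    have hlne : ∀ y ∈ l, y ≠ 0 := by
      intro y hy
      rcases List.mem_append.1 hy with hy | hy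
      · exact hLFne y hy
      · obtain ⟨i, rfl⟩ := unitList_mem s k hy
        exact single_ne_zero' s i
    have hllen : 2 ≤ l.length := by
      rw [hl, List.length_append, unitList_length]
      rcases Nat.eq_zero_or_pos LF.length with h0 | h0
      · have : LF = [] := List.length_eq_zero_iff.1 h0
        have hmk : m - k = 0 := by rw [← hLFsum, this]; rfl
        have : ∑ i, k i = ∑ i, m i := by
          apply le_antisymm (Finset.sum_le_sum fun i _ => hkm i)
          apply Finset.sum_le_sum
          intro i _
          have := congrFun hmk i
          simp only [Pi.sub_apply, Pi.zero_apply] at this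
          omega
        omega
      · have := one_le_absval hk
        omega
    have hmemset : (l.map w).prod ∈ {x : ℝ | ∃ l' : List (Fin s → ℕ), 2 ≤ l'.length ∧
        (∀ y ∈ l', y ≠ 0) ∧ l'.sum = m ∧
        (l'.map fun y => smax s q y ^ n * δ y).prod = x} :=
      ⟨l, hllen, hlne, hlsum, rfl⟩
    have hle := (hμ m hgt).2 hmemset
    refine le_trans ?_ hle
    rw [hl, List.map_append, List.prod_append, hLFprod]
    have hu1 : (1 : ℝ) ≤ ((unitList s k).map w).prod := by
      apply List.one_le_prod
      intro a ha
      rw [List.mem_map] at ha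
      obtain ⟨y, hy, rfl⟩ := ha
      obtain ⟨i, rfl⟩ := unitList_mem s k hy
      rw [hw]
      simp only
      rw [hδ1 _ (single_abs_one s i), mul_one]
      exact one_le_pow₀ (one_le_smax s q _)
    have hnn : (0 : ℝ) ≤ ∏ j, ∏ t, w (F j t) := by
      apply Finset.prod_nonneg
      intro j _
      apply Finset.prod_nonneg
      intro t _
      exact mul_nonneg (pow_nonneg (le_trans zero_le_one (one_le_smax s q _)) n)
        (hδ0 _ ((hF j).1 t))
    exact le_mul_of_one_le_right hnn hu1

private lemma prod_tupleSumR_le (s : ℕ) (w C : (Fin s → ℕ) → ℝ) {n' : ℕ} (p : Fin n' → ℕ)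
    (ls : Fin n' → Fin s → ℕ) (M : ℝ)
    (hC : ∀ lam, lam ≠ 0 → 0 ≤ C lam)
    (hM : ∀ F : (j : Fin n') → (Fin (p j) → Fin s → ℕ),
      (∀ j, (∀ t, F j t ≠ 0) ∧ (∑ t, F j t) = ls j) → (∏ j, ∏ t, w (F j t)) ≤ M) :
    (∏ j, tupleSumR s (fun x => w x * C x) (p j) (ls j)) ≤
      M * ∏ j, tupleSumR s C (p j) (ls j) := by
  have hT : ∀ j : Fin n', tupleSumR s (fun x => w x * C x) (p j) (ls j)
      = ∑ f ∈ (finite_tuples s (p j) (ls j)).toFinset,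
          (∏ t, w (f t)) * (∏ t, C (f t)) := by
    intro j
    rw [tupleSumR_eq]
    apply Finset.sum_congr rfl
    intro f _
    rw [← Finset.prod_mul_distrib]
  rw [Finset.prod_congr rfl fun j _ => hT j, Finset.prod_univ_sum]
  rw [Finset.prod_congr rfl fun j _ => tupleSumR_eq s C (p j) (ls j), Finset.prod_univ_sum,
    Finset.mul_sum]
  apply Finset.sum_le_sum
  intro F hF
  rw [Fintype.mem_piFinset] at hF
  have hFmem : ∀ j, (∀ t, F j t ≠ 0) ∧ (∑ t, F j t) = ls j := by
    intro j
    have := hF j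
    rwa [Set.Finite.mem_toFinset] at this
  have hCnn : (0 : ℝ) ≤ ∏ j, ∏ t, C (F j t) :=
    Finset.prod_nonneg fun j _ => Finset.prod_nonneg fun t _ => hC _ ((hFmem j).1 t)
  calc ∏ j, ((∏ t, w (F j t)) * (∏ t, C (F j t)))
      = (∏ j, ∏ t, w (F j t)) * (∏ j, ∏ t, C (F j t)) := Finset.prod_mul_distrib
  _ ≤ M * ∏ j, ∏ t, C (F j t) := mul_le_mul_of_nonneg_right (hM F hFmem) hCnn

private lemma abs_sum_le_mul_sum {ι : Type*} (t : Finset ι) (a : ι → ℂ) (b : ι → ℝ) (M : ℝ)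
    (h : ∀ i ∈ t, ‖a i‖ ≤ M * b i) :
    ‖∑ i ∈ t, a i‖ ≤ M * ∑ i ∈ t, b i := by
  rw [Finset.mul_sum]
  exact (norm_sum_le _ _).trans (Finset.sum_le_sum h)

private lemma abs_list_sum {s : ℕ} (l : List (Fin s → ℕ)) :
    ∑ i, l.sum i = (l.map fun y => ∑ i, y i).sum := by
  induction l with
  | nil => simp
  | cons a t ih =>
    simp only [List.sum_cons, List.map_cons, Pi.add_apply]
    rw [Finset.sum_add_distrib, ih]

private lemma entry_abs_le {s : ℕ} {l : List (Fin s → ℕ)} {y z : Fin s → ℕ}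
    (hlen : 2 ≤ l.length) (hne : ∀ x ∈ l, x ≠ 0) (hsum : l.sum = y) (hz : z ∈ l) :
    (∑ i, z i) + 1 ≤ ∑ i, y i := by
  obtain ⟨l1, l2, rfl⟩ := List.append_of_mem hz
  have h := abs_list_sum (l1 ++ z :: l2)
  rw [hsum] at h
  rw [List.map_append, List.sum_append, List.map_cons, List.sum_cons] at h
  have h1 : l1.length ≤ (l1.map fun y => ∑ i, y i).sum := by
    rw [← List.length_map (fun y => ∑ i, y i)]
    apply List.length_le_sum_of_one_le
    intro x hx
    rw [List.mem_map] at hx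
    obtain ⟨x', hx', rfl⟩ := hx
    exact one_le_absval (hne x' (by simp [hx']))
  have h2 : l2.length ≤ (l2.map fun y => ∑ i, y i).sum := by
    rw [← List.length_map (fun y => ∑ i, y i)]
    apply List.length_le_sum_of_one_le
    intro x hx
    rw [List.mem_map] at hx
    obtain ⟨x', hx', rfl⟩ := hx
    exact one_le_absval (hne x' (by simp [hx']))
  have h3 : 2 ≤ l1.length + (l2.length + 1) := by
    simpa using hlen
  linarith

/-- The reduced-equation recursion (R1):
`L(Λq^m)·c_m = Σ_{0<k≤m} Σ_p A_{k,p} Σ_{l⁽⁰⁾+⋯+l⁽ⁿ⁾=m−k} ∏_j P_j(l⁽ʲ⁾, p_j)`,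
where `P_j(l,p)` is the sum of `(q^{jλ⁽¹⁾}c_{λ⁽¹⁾})⋯(q^{jλ⁽ᵖ⁾}c_{λ⁽ᵖ⁾})` over ordered
`p`-tuples of nonzero multi-indices summing to `l`. -/
def ReducedRec (s n : ℕ) (L : Polynomial ℂ) (Λ : ℂ) (q : Fin s → ℂ)
    (A : (Fin s → ℕ) → (Fin (n + 1) → ℕ) → ℂ) (c : (Fin s → ℕ) → ℂ) : Prop :=
  ∀ m : Fin s → ℕ, m ≠ 0 →
    Polynomial.eval (Λ * ∏ i, q i ^ m i) L * c m =
      ∑ᶠ k ∈ {k : Fin s → ℕ | k ≠ 0 ∧ k ≤ m},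
        ∑ᶠ p : Fin (n + 1) → ℕ,
          A k p *
            ∑ᶠ ls ∈ {ls : Fin (n + 1) → Fin s → ℕ | (∑ j, ls j) = m - k},
              ∏ j, tupleSumC s (fun lam => (∏ i, q i ^ (j.1 * lam i)) * c lam) (p j) (ls j)

/-- The majorant recursion (R2):
`ν̃·C_m = Σ_{0<k≤m} Σ_p |A_{k,p}| Σ_{l⁽⁰⁾+⋯+l⁽ⁿ⁾=m−k} ∏_j S(l⁽ʲ⁾, p_j)`. -/
def MajorantRec (s n : ℕ) (ν' : ℝ) (A : (Fin s → ℕ) → (Fin (n + 1) → ℕ) → ℂ)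
    (C : (Fin s → ℕ) → ℝ) : Prop :=
  ∀ m : Fin s → ℕ, m ≠ 0 →
    ν' * C m =
      ∑ᶠ k ∈ {k : Fin s → ℕ | k ≠ 0 ∧ k ≤ m},
        ∑ᶠ p : Fin (n + 1) → ℕ,
          ‖A k p‖ *
            ∑ᶠ ls ∈ {ls : Fin (n + 1) → Fin s → ℕ | (∑ j, ls j) = m - k},
              ∏ j, tupleSumR s C (p j) (ls j)

/-- Lemma 2 of the paper, comparing the solution of the reduced
q-difference equation with the solution of the majorant equation. -/
theorem stmt11 (s : ℕ) (hs : 1 ≤ s) (Λ : ℂ) (hΛ : Λ ≠ 0) (q : Fin s → ℂ) (hq : ∀ i, q i ≠ 0)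
    (L : Polynomial ℂ)
    (hL : ∀ m : Fin s → ℕ, m ≠ 0 → Polynomial.eval (Λ * ∏ i, q i ^ m i) L ≠ 0)
    (n : ℕ) (hn : 1 ≤ n)
    (ε δ μ : (Fin s → ℕ) → ℝ)
    (hε : ∀ m : Fin s → ℕ, ε m = 1 / ‖Polynomial.eval (Λ * ∏ i, q i ^ m i) L‖)
    (hδ1 : ∀ m : Fin s → ℕ, (∑ i, m i) = 1 → δ m = 1)
    (hμ : ∀ m : Fin s → ℕ, 1 < ∑ i, m i →
      IsGreatest {x : ℝ | ∃ l : List (Fin s → ℕ), 2 ≤ l.length ∧ (∀ y ∈ l, y ≠ 0) ∧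
        l.sum = m ∧ (l.map fun y => smax s q y ^ n * δ y).prod = x} (μ m))
    (hδ2 : ∀ m : Fin s → ℕ, 1 < ∑ i, m i → δ m = ε m * μ m)
    (ν' : ℝ) (hν'0 : 0 < ν') (hν'1 : ν' ≤ 1)
    (hν'ε : ∀ m : Fin s → ℕ, (∑ i, m i) = 1 → ν' * ε m ≤ 1)
    (A : (Fin s → ℕ) → (Fin (n + 1) → ℕ) → ℂ)
    (hA : {kp : (Fin s → ℕ) × (Fin (n + 1) → ℕ) | A kp.1 kp.2 ≠ 0}.Finite)
    (c : (Fin s → ℕ) → ℂ) (hc : ReducedRec s n L Λ q A c)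
    (C : (Fin s → ℕ) → ℝ) (hC0 : ∀ m : Fin s → ℕ, m ≠ 0 → 0 ≤ C m)
    (hC : MajorantRec s n ν' A C) :
    ∀ m : Fin s → ℕ, m ≠ 0 → ‖c m‖ ≤ δ m * C m := by
    -- nonnegativity of δ
  have hδ0N : ∀ N : ℕ, ∀ y : Fin s → ℕ, y ≠ 0 → (∑ i, y i) ≤ N → 0 ≤ δ y := by
    intro N
    induction N with
    | zero =>
      intro y hy h0
      have := one_le_absval hy
      omega
    | succ N ihN =>
      intro y hy hN
      rcases eq_or_lt_of_le (one_le_absval hy) with h | h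
      · rw [hδ1 y h.symm]; norm_num
      · rw [hδ2 y h]
        apply mul_nonneg
        · rw [hε]; positivity
        · obtain ⟨l, hlen, hne, hsum, hprod⟩ := (hμ y h).1
          rw [← hprod]
          apply List.prod_nonneg
          intro x hx
          rw [List.mem_map] at hx
          obtain ⟨z, hzl, rfl⟩ := hx
          have hzne := hne z hzl
          have hzle : (∑ i, z i) ≤ N := by
            have := entry_abs_le hlen hne hsum hzl
            omega
          exact mul_nonneg (pow_nonneg (le_trans zero_le_one (one_le_smax s q z)) n)
            (ihN z hzne hzle)
  have hδ0' : ∀ y : Fin s → ℕ, y ≠ 0 → 0 ≤ δ y := fun y hy => hδ0N _ y hy le_rfl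
  -- main strong induction
  have main : ∀ N : ℕ, ∀ m : Fin s → ℕ, m ≠ 0 → (∑ i, m i) ≤ N →
      ‖c m‖ ≤ δ m * C m := by
    intro N
    induction N with
    | zero =>
      intro m hm h0
      have := one_le_absval hm
      omega
    | succ N ih =>
      intro m hm hN
      -- the majorant coefficient
      set Mm : ℝ := if (∑ i, m i) = 1 then 1 else μ m with hMmdef
      have hMm0 : 0 ≤ Mm := by
        rw [hMmdef]
        split_ifs with h1
        · norm_num
        · have hgt : 1 < ∑ i, m i := lt_of_le_of_ne (one_le_absval hm) (Ne.symm h1)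
          obtain ⟨l, hlen, hne, hsum, hprod⟩ := (hμ m hgt).1
          rw [← hprod]
          apply List.prod_nonneg
          intro x hx
          rw [List.mem_map] at hx
          obtain ⟨z, hzl, rfl⟩ := hx
          exact mul_nonneg (pow_nonneg (le_trans zero_le_one (one_le_smax s q z)) n)
            (hδ0' z (hne z hzl))
      -- the key per-term bound
      have key : ∀ k : Fin s → ℕ, k ≠ 0 → k ≤ m → ∀ (p : Fin (n+1) → ℕ)
          (ls : Fin (n+1) → Fin s → ℕ), (∑ j, ls j) = m - k →
          ‖∏ j, tupleSumC s
              (fun lam => (∏ i, q i ^ (j.1 * lam i)) * c lam) (p j) (ls j)‖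
            ≤ Mm * ∏ j, tupleSumR s C (p j) (ls j) := by
        intro k hk hkm p ls hls
        rw [norm_prod]
        have hsumk : (∑ i, (m - k) i) + (∑ i, k i) = ∑ i, m i := by
          rw [← Finset.sum_add_distrib]
          apply Finset.sum_congr rfl
          intro i _
          simp only [Pi.sub_apply]
          exact Nat.sub_add_cancel (hkm i)
        have hk1 := one_le_absval hk
        calc ∏ j, ‖tupleSumC s
                (fun lam => (∏ i, q i ^ (j.1 * lam i)) * c lam) (p j) (ls j)‖
            ≤ ∏ j, tupleSumR s (fun lam => (smax s q lam ^ n * δ lam) * C lam)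
                (p j) (ls j) := by
              apply Finset.prod_le_prod (fun j _ => norm_nonneg _)
              intro j _
              apply abs_tupleSumC_le
              intro lam hlam hlamle
              rw [norm_mul]
              have hqb : ‖∏ i, q i ^ (j.1 * lam i)‖ ≤ smax s q lam ^ n := by
                rw [norm_prod]
                have heq : ∀ i ∈ Finset.univ, ‖q i ^ (j.1 * lam i)‖
                    = (‖q i‖ ^ lam i) ^ j.1 := by
                  intro i _
                  rw [norm_pow, mul_comm, pow_mul]
                rw [Finset.prod_congr rfl heq, Finset.prod_pow]
                calc (∏ i, ‖q i‖ ^ lam i) ^ j.1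
                    ≤ smax s q lam ^ j.1 :=
                      pow_le_pow_left₀ (Finset.prod_nonneg fun i _ =>
                        pow_nonneg (norm_nonneg _) _) (le_max_right _ _) _
                _ ≤ smax s q lam ^ n :=
                      pow_le_pow_right₀ (one_le_smax s q lam) (Nat.lt_succ_iff.mp j.2)
              have hcb : ‖c lam‖ ≤ δ lam * C lam := by
                apply ih lam hlam
                have hle1 : ∀ i, lam i ≤ (m - k) i :=
                  fun i => le_trans (hlamle i) (entry_le_of_sum_eq hls j i)
                have hle2 : (∑ i, lam i) ≤ ∑ i, (m - k) i :=
                  Finset.sum_le_sum fun i _ => hle1 i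
                omega
              calc ‖∏ i, q i ^ (j.1 * lam i)‖ * ‖c lam‖
                  ≤ smax s q lam ^ n * (δ lam * C lam) :=
                    mul_le_mul hqb hcb (norm_nonneg _)
                      (pow_nonneg (le_trans zero_le_one (one_le_smax s q lam)) n)
              _ = (smax s q lam ^ n * δ lam) * C lam := by ring
        _ ≤ Mm * ∏ j, tupleSumR s C (p j) (ls j) := by
              apply prod_tupleSumR_le s _ C p ls Mm (fun lam h => hC0 lam h)
              intro F hF
              have hb := mub s n q δ μ hδ1 hμ hδ0' m k hm hk hkm (n+1) p ls hls F hF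
              rw [hMmdef]
              exact hb
      -- finite index sets
      have hfinK : {k : Fin s → ℕ | k ≠ 0 ∧ k ≤ m}.Finite :=
        (Set.finite_Iic m).subset (fun k hk => hk.2)
      have hPsub : ∀ (k : Fin s → ℕ) (Xc : (Fin (n+1) → ℕ) → ℂ),
          Function.support (fun p => A k p * Xc p) ⊆ ↑(hA.image Prod.snd).toFinset := by
        intro k Xc p hp
        have hAkp : A k p ≠ 0 := by
          intro h
          apply hp
          simp [h]
        rw [Finset.mem_coe, Set.Finite.mem_toFinset]
        exact ⟨(k, p), hAkp, rfl⟩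
      have hPsubR : ∀ (k : Fin s → ℕ) (Xr : (Fin (n+1) → ℕ) → ℝ),
          Function.support (fun p => ‖A k p‖ * Xr p)
            ⊆ ↑(hA.image Prod.snd).toFinset := by
        intro k Xr p hp
        have hAkp : A k p ≠ 0 := by
          intro h
          apply hp
          simp [h]
        rw [Finset.mem_coe, Set.Finite.mem_toFinset]
        exact ⟨(k, p), hAkp, rfl⟩
      have hCeq : Polynomial.eval (Λ * ∏ i, q i ^ m i) L * c m
          = ∑ k ∈ hfinK.toFinset, ∑ p ∈ (hA.image Prod.snd).toFinset, A k p *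
              ∑ ls ∈ (finite_sumto s (n+1) (m - k)).toFinset,
                ∏ j, tupleSumC s (fun lam => (∏ i, q i ^ (j.1 * lam i)) * c lam)
                  (p j) (ls j) := by
        rw [hc m hm, finsum_mem_eq_finite_toFinset_sum _ hfinK]
        apply Finset.sum_congr rfl
        intro k _
        rw [finsum_eq_finset_sum_of_support_subset _ (hPsub k _)]
        apply Finset.sum_congr rfl
        intro p _
        rw [finsum_mem_eq_finite_toFinset_sum _ (finite_sumto s (n+1) (m - k))]
      have hReq : ν' * C m
          = ∑ k ∈ hfinK.toFinset, ∑ p ∈ (hA.image Prod.snd).toFinset,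
              ‖A k p‖ *
              ∑ ls ∈ (finite_sumto s (n+1) (m - k)).toFinset,
                ∏ j, tupleSumR s C (p j) (ls j) := by
        rw [hC m hm, finsum_mem_eq_finite_toFinset_sum _ hfinK]
        apply Finset.sum_congr rfl
        intro k _
        rw [finsum_eq_finset_sum_of_support_subset _ (hPsubR k _)]
        apply Finset.sum_congr rfl
        intro p _
        rw [finsum_mem_eq_finite_toFinset_sum _ (finite_sumto s (n+1) (m - k))]
      -- the global bound
      have hbound : ‖Polynomial.eval (Λ * ∏ i, q i ^ m i) L * c m‖
          ≤ Mm * (ν' * C m) := by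
        rw [hCeq, hReq]
        apply abs_sum_le_mul_sum
        intro k hk
        rw [Set.Finite.mem_toFinset] at hk
        apply abs_sum_le_mul_sum
        intro p _
        rw [norm_mul, mul_left_comm]
        apply mul_le_mul_of_nonneg_left _ (norm_nonneg _)
        apply abs_sum_le_mul_sum
        intro ls hls
        rw [Set.Finite.mem_toFinset] at hls
        exact key k hk.1 hk.2 p ls hls
      -- conclude
      have hEne := hL m hm
      have hEabs : ‖Polynomial.eval (Λ * ∏ i, q i ^ m i) L‖ ≠ 0 := by
        simpa using hEne
      have habs : ‖c m‖
          = ε m * ‖Polynomial.eval (Λ * ∏ i, q i ^ m i) L * c m‖ := by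
        rw [hε, norm_mul]
        field_simp
      rw [habs]
      have hε0 : 0 ≤ ε m := by rw [hε]; positivity
      calc ε m * ‖Polynomial.eval (Λ * ∏ i, q i ^ m i) L * c m‖
          ≤ ε m * (Mm * (ν' * C m)) := mul_le_mul_of_nonneg_left hbound hε0
      _ ≤ δ m * C m := by
          rw [hMmdef]
          split_ifs with h1
          · rw [hδ1 m h1]
            nlinarith [mul_nonneg (sub_nonneg.2 (hν'ε m h1)) (hC0 m hm)]
          · have hgt : 1 < ∑ i, m i := lt_of_le_of_ne (one_le_absval hm) (Ne.symm h1)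
            rw [hδ2 m hgt]
            have hμ0 : 0 ≤ μ m := by
              rw [hMmdef, if_neg h1] at hMm0
              exact hMm0
            nlinarith [mul_nonneg (mul_nonneg (mul_nonneg hε0 hμ0) (hC0 m hm))
              (sub_nonneg.2 hν'1)]
  intro m hm
  exact main _ m hm le_rfl
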